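/- Fundamental lemma for run sets: if x_1:ω_1, …, x_k:ω_k ⊢ M : τ, then for any terms W_1 ∈ ⟦ω_1⟧, …, W_k ∈ ⟦ω_k⟧, the simultaneous substitution {W_1/x_1, …, W_k/x_k}M is in ⟦τ⟧. -/

import Mathlib

/-- Terms of the sequential λ-calculus in de Bruijn representation
(so terms are automatically identified up to α-equivalence):
nil `*`, variable prefix `x.M`, push/application `[N].M`,
and pop/abstraction `<x>.M`. -/
inductive STm : Type
  | star : STm
  | var  : Nat → STm → STm
  | push : STm → STm → STm
  | pop  : STm → STm

namespace STm

/-- Lifting of a renaming under a binder. -/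
def liftF (f : Nat → Nat) : Nat → Nat
  | 0 => 0
  | n+1 => f n + 1

/-- Renaming of de Bruijn indices. -/
def rename (f : Nat → Nat) : STm → STm
  | star => star
  | var n M => var (f n) (rename f M)
  | push N M => push (rename f N) (rename f M)
  | pop M => pop (rename (liftF f) M)

/-- Capture-avoiding composition `N ; M`. -/
def comp : STm → STm → STm
  | star, P => P
  | var n N, P => var n (comp N P)
  | push Q N, P => push Q (comp N P)
  | pop N, P => pop (comp N (rename Nat.succ P))

/-- Lifting of a substitution under a binder. -/
def liftS (σ : Nat → STm) : Nat → STm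
  | 0 => var 0 star
  | n+1 => rename Nat.succ (σ n)

/-- Capture-avoiding simultaneous substitution; note
`{N/x}(x.M) = N ; {N/x}M`. -/
def subst (σ : Nat → STm) : STm → STm
  | star => star
  | var n M => comp (σ n) (subst σ M)
  | push N M => push (subst σ N) (subst σ M)
  | pop M => pop (subst (liftS σ) M)

/-- Capture-avoiding substitution `{N/x}M` of `N` for the variable bound
immediately outside `M`. -/
def subst1 (N : STm) : STm → STm :=
  subst (fun n => match n with | 0 => N | n+1 => var n star)

end STm

/-- Machine states: a stack of terms (written bottom-first, so the top
element is the last element of the list) together with a term. -/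
abbrev SState := List STm × STm

/-- The transitions of the sequential stack machine:
`(S, [N].M) → (S·N, M)` and `(S·N, <x>.M) → (S, {N/x}M)`. -/
inductive SMStep : SState → SState → Prop
  | push (S : List STm) (N M : STm) : SMStep (S, .push N M) (S ++ [N], M)
  | pop (S : List STm) (N M : STm) : SMStep (S ++ [N], .pop M) (S, STm.subst1 N M)

/-- A run of the sequential machine: a finite sequence of transitions. -/
def SRun : SState → SState → Prop := Relation.ReflTransGen SMStep

/-- Sequential types `ρ_n…ρ_1 ⟹ τ_1…τ_m`: an implication between two
finite vectors of sequential types. The first list is the input vector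
as written (i.e. `arr (rev ρ⃗) τ⃗` represents `rev(ρ⃗) ⟹ τ⃗`). -/
inductive STy : Type
  | arr : List STy → List STy → STy

/-- Typing judgments `Γ ⊢ M : τ` of the sequential λ-calculus, with the
context `Γ` a finite map from (de Bruijn) variables to types, given as a
list. -/
inductive Typing : List STy → STm → STy → Prop
  | star (Γ : List STy) (τs : List STy) :
      Typing Γ .star (.arr τs.reverse τs)
  | var (Γ : List STy) (n : Nat) (M : STm) (ρs σs τs υs : List STy) :
      Γ[n]? = some (.arr ρs.reverse σs) →
      Typing Γ M (.arr (σs.reverse ++ τs.reverse) υs) →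
      Typing Γ (.var n M) (.arr (ρs.reverse ++ τs.reverse) υs)
  | abs (Γ : List STy) (M : STm) (ρ : STy) (σs τs : List STy) :
      Typing (ρ :: Γ) M (.arr σs.reverse τs) →
      Typing Γ (.pop M) (.arr (ρ :: σs.reverse) τs)
  | app (Γ : List STy) (N M : STm) (ρ : STy) (σs τs : List STy) :
      Typing Γ N ρ →
      Typing Γ M (.arr (ρ :: σs.reverse) τs) →
      Typing Γ (.push N M) (.arr σs.reverse τs)

mutual
/-- The run set `⟦τ⟧` of a sequential type `τ = rev(σ⃗) ⟹ τ⃗`: the terms `M`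
such that for every stack `S ∈ ⟦σ⃗⟧` there are a stack `T ∈ ⟦τ⃗⟧` and a
machine run `(S,M) ⇓ (T,*)`. -/
def RunSet : STy → STm → Prop
  | .arr ins outs => fun M =>
      ∀ S : List STm, StackSet ins S.reverse →
        ∃ T : List STm, StackSet outs T ∧ SRun (S, M) (T, .star)
/-- The set `⟦τ_1…τ_n⟧` of stacks `ε·N_1·…·N_n` with each `N_i ∈ ⟦τ_i⟧`
(the type vector and the stack both listed bottom-first). -/
def StackSet : List STy → List STm → Prop
  | [], S => S = []
  | _ :: _, [] => False
  | τ :: τs, N :: S => RunSet τ N ∧ StackSet τs S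
end

namespace STm

theorem liftF_comp (f g : Nat → Nat) :
    (fun n => liftF f (liftF g n)) = liftF (fun n => f (g n)) := by
  funext n; cases n <;> rfl

theorem rename_rename (f g : Nat → Nat) (t : STm) :
    rename f (rename g t) = rename (fun n => f (g n)) t := by
  induction t generalizing f g with
  | star => rfl
  | var n M ih => simp [rename, ih]
  | push N M ihN ihM => simp [rename, ihN, ihM]
  | pop M ih => simp [rename, ih, liftF_comp]

theorem rename_comp (f : Nat → Nat) (A B : STm) :
    rename f (comp A B) = comp (rename f A) (rename f B) := by
  induction A generalizing f B with
  | star => rfl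
  | var n M ih => simp [comp, rename, ih]
  | push N M ihN ihM => simp [comp, rename, ihM]
  | pop M ih =>
    simp only [comp, rename, ih, rename_rename]
    congr 2

theorem comp_assoc (A B C : STm) :
    comp (comp A B) C = comp A (comp B C) := by
  induction A generalizing B C with
  | star => rfl
  | var n M ih => simp [comp, ih]
  | push N M ihN ihM => simp [comp, ihM]
  | pop M ih => simp [comp, ih, rename_comp]

theorem subst_rename (σ : Nat → STm) (f : Nat → Nat) (t : STm) :
    subst σ (rename f t) = subst (fun n => σ (f n)) t := by
  induction t generalizing σ f with
  | star => rfl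
  | var n M ih => simp [rename, subst, ih]
  | push N M ihN ihM => simp [rename, subst, ihN, ihM]
  | pop M ih =>
    simp only [rename, subst, ih]
    rw [show (fun n => liftS σ (liftF f n)) = liftS (fun n => σ (f n)) by
      funext n; cases n <;> rfl]

theorem rename_subst (f : Nat → Nat) (σ : Nat → STm) (t : STm) :
    rename f (subst σ t) = subst (fun n => rename f (σ n)) t := by
  induction t generalizing σ f with
  | star => rfl
  | var n M ih => simp [rename, subst, ih, rename_comp]
  | push N M ihN ihM => simp [rename, subst, ihN, ihM]
  | pop M ih =>
    simp only [rename, subst, ih]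
    rw [show (fun n => rename (liftF f) (liftS σ n))
        = liftS (fun n => rename f (σ n)) by
      funext n
      cases n with
      | zero => rfl
      | succ n => simp [liftS, rename_rename]; rfl]

theorem subst_comp (σ : Nat → STm) (A B : STm) :
    subst σ (comp A B) = comp (subst σ A) (subst σ B) := by
  induction A generalizing σ B with
  | star => rfl
  | var n M ih => simp [comp, subst, ih, comp_assoc]
  | push N M ihN ihM => simp [comp, subst, ihM]
  | pop M ih =>
    simp only [comp, subst, ih, subst_rename, rename_subst]
    congr 2

theorem comp_star (A : STm) : comp A star = A := by
  induction A with
  | star => rfl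
  | var n M ih => simp [comp, ih]
  | push N M ihN ihM => simp [comp, ihM]
  | pop M ih => simp [comp, rename, ih]

theorem subst_id (t : STm) : subst (fun n => var n star) t = t := by
  induction t with
  | star => rfl
  | var n M ih => simp [subst, comp, ih]
  | push N M ihN ihM => simp [subst, ihN, ihM]
  | pop M ih =>
    simp only [subst]
    congr 1
    rw [show liftS (fun n => var n star) = (fun n => var n star) by
      funext n; cases n <;> rfl]
    exact ih

theorem subst_subst (f g : Nat → STm) (t : STm) :
    subst f (subst g t) = subst (fun n => subst f (g n)) t := by
  induction t generalizing f g with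
  | star => rfl
  | var n M ih => simp [subst, ih, subst_comp]
  | push N M ihN ihM => simp [subst, ihN, ihM]
  | pop M ih =>
    simp only [subst, ih]
    rw [show (fun n => subst (liftS f) (liftS g n))
        = liftS (fun n => subst f (g n)) by
      funext n
      cases n with
      | zero => rfl
      | succ n => simp [liftS, subst_rename, rename_subst]]

theorem subst1_rename_succ (N P : STm) : subst1 N (rename Nat.succ P) = P := by
  rw [subst1, subst_rename]
  exact subst_id P

theorem subst1_comp (N A B : STm) :
    subst1 N (comp A B) = comp (subst1 N A) (subst1 N B) :=
  subst_comp _ A B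

end STm

theorem SMStep.comp_right {s s' : SState} (h : SMStep s s') (P : STm) :
    SMStep (s.1, STm.comp s.2 P) (s'.1, STm.comp s'.2 P) := by
  cases h with
  | push S N M => exact SMStep.push S N (STm.comp M P)
  | pop S N M =>
    have := SMStep.pop S N (STm.comp M (STm.rename Nat.succ P))
    rwa [show STm.subst1 N (STm.comp M (STm.rename Nat.succ P))
        = STm.comp (STm.subst1 N M) P by
      rw [STm.subst1_comp, STm.subst1_rename_succ]] at this

theorem SRun.comp_right {s t : SState} (h : SRun s t) (P : STm) :
    SRun (s.1, STm.comp s.2 P) (t.1, STm.comp t.2 P) := by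
  induction h with
  | refl => exact Relation.ReflTransGen.refl
  | tail _ hstep ih => exact Relation.ReflTransGen.tail ih (hstep.comp_right P)

theorem SRun.comp_star {S T : List STm} {M : STm} (h : SRun (S, M) (T, .star))
    (P : STm) : SRun (S, STm.comp M P) (T, P) := by
  have := h.comp_right P
  simpa [STm.comp] using this

theorem SMStep.frame {s s' : SState} (h : SMStep s s') (U : List STm) :
    SMStep (U ++ s.1, s.2) (U ++ s'.1, s'.2) := by
  cases h with
  | push S N M =>
    have := SMStep.push (U ++ S) N M
    simpa using this
  | pop S N M =>
    have := SMStep.pop (U ++ S) N M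
    simpa using this

theorem SRun.frame {s t : SState} (h : SRun s t) (U : List STm) :
    SRun (U ++ s.1, s.2) (U ++ t.1, t.2) := by
  induction h with
  | refl => exact Relation.ReflTransGen.refl
  | tail _ hstep ih => exact Relation.ReflTransGen.tail ih (hstep.frame U)

theorem stackSet_iff : ∀ (τs : List STy) (S : List STm),
    StackSet τs S ↔ List.Forall₂ RunSet τs S
  | [], [] => by simp [StackSet]
  | [], _ :: _ => by simp [StackSet]
  | _ :: _, [] => by simp [StackSet]
  | τ :: τs, N :: S => by
    simp [StackSet, stackSet_iff τs S]

theorem runSet_arr (ins outs : List STy) (M : STm) :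
    RunSet (.arr ins outs) M ↔ ∀ S : List STm, StackSet ins S.reverse →
      ∃ T, StackSet outs T ∧ SRun (S, M) (T, .star) := by
  simp [RunSet]

theorem forall₂_getD {Γ : List STy} {Ws : List STm}
    (h : List.Forall₂ RunSet Γ Ws) :
    ∀ {n : Nat} {ω : STy}, Γ[n]? = some ω → RunSet ω (Ws.getD n .star) := by
  induction h with
  | nil => intro n ω h; simp at h
  | cons hR htail ih =>
    intro n ω h
    cases n with
    | zero => simp_all
    | succ n => exact ih (by simpa using h)

theorem forall₂_append_split {R : STy → STm → Prop} :
    ∀ {A B : List STy} {L : List STm}, List.Forall₂ R (A ++ B) L →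
      ∃ L1 L2, L = L1 ++ L2 ∧ List.Forall₂ R A L1 ∧ List.Forall₂ R B L2 := by
  intro A
  induction A with
  | nil => intro B L h; exact ⟨[], L, rfl, List.Forall₂.nil, h⟩
  | cons a A ih =>
    intro B L h
    cases h with
    | cons hab htail =>
      obtain ⟨L1, L2, rfl, h1, h2⟩ := ih htail
      exact ⟨_ :: L1, L2, rfl, List.Forall₂.cons hab h1, h2⟩

/-- Fundamental lemma for run sets: if `x_1:ω_1, …, x_k:ω_k ⊢ M : τ` and
`W_i ∈ ⟦ω_i⟧` for each `i`, then the simultaneous substitution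
`{W_1/x_1, …, W_k/x_k}M` is in `⟦τ⟧`. -/
theorem seq_fundamental_lemma (Γ : List STy) (M : STm) (τ : STy) (Ws : List STm)
    (hM : Typing Γ M τ) (hWs : List.Forall₂ RunSet Γ Ws) :
    RunSet τ (STm.subst (fun i => Ws.getD i .star) M) := by
  revert hWs
  induction hM generalizing Ws with
  | star Γ τs =>
    intro hWs
    simp only [STm.subst]
    rw [runSet_arr]
    intro S hS
    refine ⟨S, ?_, Relation.ReflTransGen.refl⟩
    rw [stackSet_iff] at hS ⊢
    exact List.forall₂_reverse_iff.mp hS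
  | var Γ n M ρs σs τs υs hget hM ih =>
    intro hWs
    simp only [STm.subst]
    rw [runSet_arr]
    intro S hS
    rw [stackSet_iff] at hS
    obtain ⟨L1, L2, hSL, h1, h2⟩ := forall₂_append_split hS
    have hN := forall₂_getD hWs hget
    rw [runSet_arr] at hN
    obtain ⟨T0, hT0, hrun1⟩ := hN L1.reverse
      (by rw [stackSet_iff]; simpa using h1)
    have hS_eq : S = L2.reverse ++ L1.reverse := by
      rw [← List.reverse_append, ← hSL, List.reverse_reverse]
    have hrun1' := hrun1.frame L2.reverse
    have hrun2 := SRun.comp_star hrun1'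
      (STm.subst (fun i => Ws.getD i .star) M)
    have hM' := ih Ws hWs
    rw [runSet_arr] at hM'
    obtain ⟨T, hT, hrun3⟩ := hM' (L2.reverse ++ T0) (by
      rw [stackSet_iff]
      simp only [List.reverse_append, List.reverse_reverse]
      exact List.rel_append (List.forall₂_reverse_iff.mpr
        (stackSet_iff _ _ |>.mp hT0)) h2)
    refine ⟨T, hT, ?_⟩
    rw [hS_eq]
    exact hrun2.trans hrun3
  | abs Γ M ρ σs τs hM0 ih =>
    intro hWs
    simp only [STm.subst]
    rw [runSet_arr]
    intro S hS
    rw [stackSet_iff] at hS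
    obtain ⟨N, rest, hN, hrest, hrev⟩ := List.forall₂_cons_left_iff.mp hS
    have hSeq : S = rest.reverse ++ [N] := by
      rw [← List.reverse_reverse S, hrev]; simp
    have key : STm.subst1 N (STm.subst (STm.liftS fun i => Ws.getD i .star) M)
        = STm.subst (fun i => (N :: Ws).getD i .star) M := by
      rw [STm.subst1, STm.subst_subst]
      congr 1
      funext i
      cases i with
      | zero =>
        show STm.comp N (STm.subst _ .star) = N
        simp only [STm.subst, STm.comp_star]
      | succ i =>
        show STm.subst1 N (STm.rename Nat.succ _) = _
        rw [STm.subst1_rename_succ]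
        rfl
    have ihr := ih (N :: Ws) (List.Forall₂.cons hN hWs)
    rw [runSet_arr] at ihr
    obtain ⟨T, hT, hrun⟩ := ihr rest.reverse
      (by rw [stackSet_iff]; simpa using hrest)
    refine ⟨T, hT, ?_⟩
    rw [hSeq]
    exact Relation.ReflTransGen.head (SMStep.pop rest.reverse N _)
      (by rw [key]; exact hrun)
  | app Γ N M ρ σs τs hN hM ihN ihM =>
    intro hWs
    simp only [STm.subst]
    rw [runSet_arr]
    intro S hS
    have hM' := ihM Ws hWs
    rw [runSet_arr] at hM'
    obtain ⟨T, hT, hrun⟩ := hM'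
      (S ++ [STm.subst (fun i => Ws.getD i .star) N]) (by
        rw [stackSet_iff]
        simp only [List.reverse_append, List.reverse_cons, List.reverse_nil,
          List.nil_append, List.singleton_append]
        exact List.Forall₂.cons (ihN Ws hWs) ((stackSet_iff _ _).mp hS))
    exact ⟨T, hT, Relation.ReflTransGen.head (SMStep.push S _ _) hrun⟩
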